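/- Let f : [-1,1] → ℝ be of r-H_f-Hölder type on [−1,1], i.e. |f(x) − f(y)| ≤ H_f·|x − y|^r for all x, y ∈ [−1,1], where r > 0 and H_f > 0 are given. Then |∫_{-1}^{1} f(t) dt − f(−√3/3) − f(√3/3)| ≤ (H_f/(r+1))·[((3−√3)/3)^{r+1} + ((3+√3)/3)^{r+1}]. -/

import Mathlib

open MeasureTheory intervalIntegral

lemma holder_abs_int (c r : ℝ) (hc : c ∈ Set.Icc (-1 : ℝ) 1) (hr : 0 < r) :
    ∫ t in (-1 : ℝ)..1, |t - c| ^ r = ((c + 1) ^ (r + 1) + (1 - c) ^ (r + 1)) / (r + 1) := by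
  have hcont : Continuous fun t : ℝ => |t - c| ^ r :=
    (continuous_abs.comp (continuous_id.sub continuous_const)).rpow_const
      (fun x => Or.inr hr.le)
  have h1 : IntervalIntegrable (fun t : ℝ => |t - c| ^ r) volume (-1) c :=
    hcont.intervalIntegrable _ _
  have h2 : IntervalIntegrable (fun t : ℝ => |t - c| ^ r) volume c 1 :=
    hcont.intervalIntegrable _ _
  rw [← intervalIntegral.integral_add_adjacent_intervals h1 h2]
  have e1 : ∫ t in (-1 : ℝ)..c, |t - c| ^ r = ∫ t in (-1 : ℝ)..c, (c - t) ^ r := by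
    apply intervalIntegral.integral_congr
    intro t ht
    rw [Set.uIcc_of_le hc.1] at ht
    show |t - c| ^ r = (c - t) ^ r
    rw [abs_sub_comm, abs_of_nonneg (by linarith [ht.2])]
  have e2 : ∫ t in c..(1 : ℝ), |t - c| ^ r = ∫ t in c..(1 : ℝ), (t - c) ^ r := by
    apply intervalIntegral.integral_congr
    intro t ht
    rw [Set.uIcc_of_le hc.2] at ht
    show |t - c| ^ r = (t - c) ^ r
    rw [abs_of_nonneg (by linarith [ht.1])]
  have hz : (0 : ℝ) ^ (r + 1) = 0 := Real.zero_rpow (by linarith)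
  have i1 : ∫ t in (-1 : ℝ)..c, (c - t) ^ r = (c + 1) ^ (r + 1) / (r + 1) := by
    rw [intervalIntegral.integral_comp_sub_left (fun u => u ^ r) c]
    rw [integral_rpow (Or.inl (by linarith))]
    rw [sub_self, hz]
    ring_nf
  have i2 : ∫ t in c..(1 : ℝ), (t - c) ^ r = (1 - c) ^ (r + 1) / (r + 1) := by
    rw [intervalIntegral.integral_comp_sub_right (fun u => u ^ r) c]
    rw [integral_rpow (Or.inl (by linarith))]
    rw [sub_self, hz]
    ring_nf
  rw [e1, e2, i1, i2]
  ring

/-- If `f` is of `r`-`H_f`-Hölder type on `[-1,1]`, then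
`|∫_{-1}^1 f(t) dt - f(-√3/3) - f(√3/3)|
  ≤ (H_f/(r+1)) · [((3-√3)/3)^(r+1) + ((3+√3)/3)^(r+1)]`. -/
theorem two_point_GL_holder_riemann_sharp (f : ℝ → ℝ) (r Hf : ℝ)
    (hr : 0 < r) (hHf : 0 < Hf)
    (hf : ∀ x ∈ Set.Icc (-1 : ℝ) 1, ∀ y ∈ Set.Icc (-1 : ℝ) 1,
      |f x - f y| ≤ Hf * |x - y| ^ r) :
    |(∫ t in (-1 : ℝ)..1, f t) - f (-(Real.sqrt 3) / 3) - f (Real.sqrt 3 / 3)|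
      ≤ (Hf / (r + 1))
        * (((3 - Real.sqrt 3) / 3) ^ (r + 1) + ((3 + Real.sqrt 3) / 3) ^ (r + 1)) := by
  set s := Real.sqrt 3 with hs
  have hs0 : 0 ≤ s := Real.sqrt_nonneg 3
  have hs3 : s ≤ 3 := by
    nlinarith [Real.sq_sqrt (by norm_num : (3:ℝ) ≥ 0)]
  set x1 : ℝ := -s / 3 with hx1
  set x2 : ℝ := s / 3 with hx2
  have hx1m : x1 ∈ Set.Icc (-1 : ℝ) 1 := by
    constructor <;> [skip; skip] <;> rw [hx1] <;> nlinarith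
  have hx2m : x2 ∈ Set.Icc (-1 : ℝ) 1 := by
    constructor <;> [skip; skip] <;> rw [hx2] <;> nlinarith
  -- continuity of f on Icc
  have hfc : ContinuousOn f (Set.Icc (-1 : ℝ) 1) := by
    intro x hx
    have hg : Continuous fun y : ℝ => Hf * |y - x| ^ r :=
      continuous_const.mul
        ((continuous_abs.comp (continuous_id.sub continuous_const)).rpow_const
          (fun _ => Or.inr hr.le))
    rw [Metric.continuousWithinAt_iff]
    intro ε hε
    have hg0 : Hf * |x - x| ^ r = 0 := by
      rw [sub_self, abs_zero, Real.zero_rpow (ne_of_gt hr)]; ring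
    have : ContinuousAt (fun y : ℝ => Hf * |y - x| ^ r) x := hg.continuousAt
    rw [Metric.continuousAt_iff] at this
    obtain ⟨δ, hδ, hδ'⟩ := this ε hε
    refine ⟨δ, hδ, fun {y} hy hyd => ?_⟩
    have hb := hf y hy x hx
    have := hδ' hyd
    rw [Real.dist_eq, hg0, sub_zero] at this
    rw [Real.dist_eq]
    have habs : |Hf * |y - x| ^ r| = Hf * |y - x| ^ r := by
      rw [abs_of_nonneg]
      positivity
    rw [habs] at this
    linarith [hb]
  have hint : IntervalIntegrable f volume (-1) 1 := by
    apply ContinuousOn.intervalIntegrable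
    rwa [Set.uIcc_of_le (by norm_num : (-1:ℝ) ≤ 1)]
  -- bound for a single node
  have key : ∀ c ∈ Set.Icc (-1 : ℝ) 1,
      |(∫ t in (-1 : ℝ)..1, f t) - 2 * f c|
        ≤ Hf * (((c + 1) ^ (r + 1) + (1 - c) ^ (r + 1)) / (r + 1)) := by
    intro c hc
    have hic : IntervalIntegrable (fun _ : ℝ => f c) volume (-1) 1 :=
      intervalIntegrable_const
    have hsub : (∫ t in (-1 : ℝ)..1, f t) - 2 * f c
        = ∫ t in (-1 : ℝ)..1, (f t - f c) := by
      rw [intervalIntegral.integral_sub hint hic, intervalIntegral.integral_const,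
        smul_eq_mul]
      norm_num
    have hbnd : IntervalIntegrable (fun t : ℝ => Hf * |t - c| ^ r) volume (-1) 1 := by
      apply Continuous.intervalIntegrable
      exact continuous_const.mul
        ((continuous_abs.comp (continuous_id.sub continuous_const)).rpow_const
          (fun _ => Or.inr hr.le))
    have hle : ‖∫ t in (-1 : ℝ)..1, (f t - f c)‖
        ≤ |∫ t in (-1 : ℝ)..1, Hf * |t - c| ^ r| := by
      apply intervalIntegral.norm_integral_le_abs_of_norm_le _ hbnd
      have hIoc : Set.uIoc (-1 : ℝ) 1 ⊆ Set.Icc (-1 : ℝ) 1 := by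
        rw [Set.uIoc_of_le (by norm_num : (-1:ℝ) ≤ 1)]
        exact Set.Ioc_subset_Icc_self
      refine (ae_restrict_iff' measurableSet_uIoc).2 (Filter.Eventually.of_forall ?_)
      intro t ht
      exact hf t (hIoc ht) c hc
    have hval : ∫ t in (-1 : ℝ)..1, Hf * |t - c| ^ r
        = Hf * (((c + 1) ^ (r + 1) + (1 - c) ^ (r + 1)) / (r + 1)) := by
      rw [intervalIntegral.integral_const_mul, holder_abs_int c r hc hr]
    rw [hsub]
    calc |∫ t in (-1 : ℝ)..1, (f t - f c)|
        ≤ |∫ t in (-1 : ℝ)..1, Hf * |t - c| ^ r| := hle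
      _ = Hf * (((c + 1) ^ (r + 1) + (1 - c) ^ (r + 1)) / (r + 1)) := by
          have hnn : 0 ≤ ∫ t in (-1 : ℝ)..1, Hf * |t - c| ^ r :=
            intervalIntegral.integral_nonneg (by norm_num) (fun t _ => by positivity)
          rw [abs_of_nonneg hnn, hval]
  have k1 := key x1 hx1m
  have k2 := key x2 hx2m
  have e1 : x1 + 1 = (3 - s) / 3 := by rw [hx1]; ring
  have e2 : (1 : ℝ) - x1 = (3 + s) / 3 := by rw [hx1]; ring
  have e3 : x2 + 1 = (3 + s) / 3 := by rw [hx2]; ring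
  have e4 : (1 : ℝ) - x2 = (3 - s) / 3 := by rw [hx2]; ring
  rw [e1, e2] at k1
  rw [e3, e4] at k2
  have hsplit : (∫ t in (-1 : ℝ)..1, f t) - f (-s / 3) - f (s / 3)
      = (1 / 2) * ((∫ t in (-1 : ℝ)..1, f t) - 2 * f x1)
        + (1 / 2) * ((∫ t in (-1 : ℝ)..1, f t) - 2 * f x2) := by
    rw [hx1, hx2]; ring
  rw [hsplit]
  calc |(1 / 2) * ((∫ t in (-1 : ℝ)..1, f t) - 2 * f x1)
        + (1 / 2) * ((∫ t in (-1 : ℝ)..1, f t) - 2 * f x2)|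
      ≤ |(1 / 2) * ((∫ t in (-1 : ℝ)..1, f t) - 2 * f x1)|
        + |(1 / 2) * ((∫ t in (-1 : ℝ)..1, f t) - 2 * f x2)| := abs_add_le _ _
    _ = (1 / 2) * |(∫ t in (-1 : ℝ)..1, f t) - 2 * f x1|
        + (1 / 2) * |(∫ t in (-1 : ℝ)..1, f t) - 2 * f x2| := by
          have h12 : |(1:ℝ)/2| = 1/2 := by norm_num
          rw [abs_mul, abs_mul, h12]
    _ ≤ (Hf / (r + 1)) * (((3 - s) / 3) ^ (r + 1) + ((3 + s) / 3) ^ (r + 1)) := by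
          have heq : Hf / (r + 1) * (((3 - s) / 3) ^ (r + 1) + ((3 + s) / 3) ^ (r + 1))
              = Hf * ((((3 - s) / 3) ^ (r + 1) + ((3 + s) / 3) ^ (r + 1)) / (r + 1)) := by
            ring
          have hk : Hf * ((((3 + s) / 3) ^ (r + 1) + ((3 - s) / 3) ^ (r + 1)) / (r + 1))
              = Hf * ((((3 - s) / 3) ^ (r + 1) + ((3 + s) / 3) ^ (r + 1)) / (r + 1)) := by
            ring
          rw [hk] at k2
          rw [heq]
          linarith [k1, k2]
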